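/- Let A be a commutative ring, S ⊆ A an archimedean subsemiring (S + ℤ·1 = A), G an A-module, M ⊆ G a submonoid closed under the S-action (S·M ⊆ M), and u ∈ M an order unit of (G, M). Then every pure state φ of (G, M, u) satisfies the multiplicative law φ(a·g) = φ(a·u)·φ(g) for all a ∈ A and g ∈ G. -/

import Mathlib

/-- A state of `(G, M, u)`. -/
def IsState {G : Type*} [AddCommGroup G] (M : AddSubmonoid G) (u : G) (φ : G →+ ℝ) : Prop :=
  (∀ m ∈ M, 0 ≤ φ m) ∧ φ u = 1

/-- A pure state of `(G, M, u)`. -/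
def IsPureState {G : Type*} [AddCommGroup G] (M : AddSubmonoid G) (u : G) (φ : G →+ ℝ) : Prop :=
  IsState M u φ ∧ ∀ φ₁ φ₂ : G →+ ℝ, IsState M u φ₁ → IsState M u φ₂ →
    φ + φ = φ₁ + φ₂ → φ₁ = φ ∧ φ₂ = φ

private lemma pure_key {G : Type*} [AddCommGroup G] (M : AddSubmonoid G) (u : G) (hu : u ∈ M)
    (φ : G →+ ℝ) (hφ : IsPureState M u φ) (ψ : G →+ ℝ) (n : ℝ) (hn : 0 < n)
    (hψ : ∀ m ∈ M, 0 ≤ ψ m) (hχ : ∀ m ∈ M, ψ m ≤ n * φ m)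
    (h2t : 2 * ψ u ≤ n) : ∀ g, ψ g = ψ u * φ g := by
  set t := ψ u with ht
  have ht0 : 0 ≤ t := hψ u hu
  have hnt : 0 < n - t := by linarith
  have hφu : φ u = 1 := hφ.1.2
  set χ : G →+ ℝ := n • φ - ψ with hχdef
  have hχapp : ∀ g, χ g = n * φ g - ψ g := by
    intro g; simp [hχdef, smul_eq_mul]
  have hχm : ∀ m ∈ M, 0 ≤ χ m := by
    intro m hm; rw [hχapp]; linarith [hχ m hm]
  set φ₂ : G →+ ℝ := (n - t)⁻¹ • χ with hφ₂def
  set φ₁ : G →+ ℝ := (2 / n) • ψ + ((n - 2*t)/(n*(n-t))) • χ with hφ₁def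
  have hφ₂app : ∀ g, φ₂ g = (n - t)⁻¹ * (n * φ g - ψ g) := by
    intro g; simp [hφ₂def, hχapp, smul_eq_mul]
  have hφ₁app : ∀ g, φ₁ g = (2 / n) * ψ g + ((n - 2*t)/(n*(n-t))) * (n * φ g - ψ g) := by
    intro g; simp [hφ₁def, hχapp, smul_eq_mul]
  have hs2 : IsState M u φ₂ := by
    constructor
    · intro m hm
      rw [hφ₂app]
      have := hχ m hm
      have h1 : 0 ≤ (n - t)⁻¹ := le_of_lt (inv_pos.2 hnt)
      nlinarith
    · rw [hφ₂app, hφu, ht]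
      field_simp [show n - ψ u ≠ 0 from ne_of_gt hnt]
  have hs1 : IsState M u φ₁ := by
    constructor
    · intro m hm
      rw [hφ₁app]
      have h1 := hψ m hm
      have h2 := hχ m hm
      have h3 : 0 ≤ 2 / n := by positivity
      have h4 : 0 ≤ (n - 2*t)/(n*(n-t)) := by
        apply div_nonneg (by linarith) (by positivity)
      nlinarith
    · rw [hφ₁app, hφu, ht]
      field_simp [show n - ψ u ≠ 0 from ne_of_gt hnt]
      ring
  have hsum : φ + φ = φ₁ + φ₂ := by
    ext g
    simp only [AddMonoidHom.add_apply]
    rw [hφ₁app, hφ₂app]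
    field_simp
    ring
  obtain ⟨-, h2⟩ := hφ.2 φ₁ φ₂ hs1 hs2 hsum
  intro g
  have := DFunLike.congr_fun h2 g
  rw [hφ₂app] at this
  have hne : (n - t) ≠ 0 := ne_of_gt hnt
  field_simp at this
  linarith

private lemma pure_key2 {G : Type*} [AddCommGroup G] (M : AddSubmonoid G) (u : G) (hu : u ∈ M)
    (φ : G →+ ℝ) (hφ : IsPureState M u φ) (ψ : G →+ ℝ) (n : ℝ) (hn : 0 < n)
    (hψ : ∀ m ∈ M, 0 ≤ ψ m) (hχ : ∀ m ∈ M, ψ m ≤ n * φ m) :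
    ∀ g, ψ g = ψ u * φ g := by
  by_cases h : 2 * ψ u ≤ n
  · exact pure_key M u hu φ hφ ψ n hn hψ hχ h
  · set χ : G →+ ℝ := n • φ - ψ with hχdef
    have hχapp : ∀ g, χ g = n * φ g - ψ g := by
      intro g; simp [hχdef, smul_eq_mul]
    have hφu : φ u = 1 := hφ.1.2
    have key := pure_key M u hu φ hφ χ n hn
      (fun m hm => by rw [hχapp]; linarith [hχ m hm])
      (fun m hm => by rw [hχapp]; linarith [hψ m hm])
      (by rw [hχapp, hφu]; linarith)
    intro g
    have h1 := key g
    rw [hχapp, hχapp, hφu] at h1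
    nlinarith [h1]

/-- Multiplicative law for pure states. -/
theorem multiplicative_law {A : Type*} [CommRing A] {G : Type*} [AddCommGroup G] [Module A G]
    (S : Subsemiring A) (harch : ∀ a : A, ∃ k : ℤ, (k : A) + a ∈ S)
    (M : AddSubmonoid G) (hSM : ∀ s ∈ S, ∀ m ∈ M, s • m ∈ M)
    (u : G) (hu : u ∈ M)
    (horder : ∀ g : G, ∃ (k : ℤ) (m : G), m ∈ M ∧ g = m + k • u)
    (φ : G →+ ℝ) (hφ : IsPureState M u φ) :
    ∀ (a : A) (g : G), φ (a • g) = φ (a • u) * φ g := by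
  -- First, the result for s ∈ S
  have hS : ∀ s ∈ S, ∀ g : G, φ (s • g) = φ (s • u) * φ g := by
    intro s hs
    -- find an integer bound n ≥ 1 with (n : A) - s ∈ S
    obtain ⟨k, hk⟩ := harch (-s)
    set n : ℤ := max k 1 with hndef
    have hn1 : 1 ≤ n := le_max_right k 1
    have hkn : k ≤ n := le_max_left k 1
    have hnS : (n : A) - s ∈ S := by
      have h1 : ((n - k).toNat : A) ∈ S := natCast_mem S _
      have h2 : ((n - k).toNat : A) = ((n : A) - (k : A)) := by
        rw [← Int.cast_natCast, Int.toNat_of_nonneg (by omega)]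
        push_cast; ring
      have := S.add_mem (h2 ▸ h1) hk
      convert this using 1; ring
    set ψ : G →+ ℝ := φ.comp (DistribMulAction.toAddMonoidHom G s) with hψdef
    have hψapp : ∀ g, ψ g = φ (s • g) := fun g => rfl
    have hnsmul : ∀ g : G, φ ((n : A) • g) = (n : ℝ) * φ g := by
      intro g
      rw [Int.cast_smul_eq_zsmul, map_zsmul, zsmul_eq_mul]
    have key := pure_key2 M u hu φ hφ ψ (n : ℝ) (by exact_mod_cast hn1.trans_lt' zero_lt_one)
      (fun m hm => hφ.1.1 _ (hSM s hs m hm))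
      (by
        intro m hm
        have hmem : ((n : A) - s) • m ∈ M := hSM _ hnS m hm
        have := hφ.1.1 _ hmem
        rw [sub_smul, map_sub, hnsmul] at this
        rw [hψapp]
        linarith)
    intro g
    rw [← hψapp, ← hψapp, key g]
  intro a g
  obtain ⟨k, hk⟩ := harch a
  have h1 : a • g = ((k : A) + a) • g - (k : A) • g := by rw [add_smul]; abel
  have h2 : a • u = ((k : A) + a) • u - (k : A) • u := by rw [add_smul]; abel
  have hkφ : ∀ x : G, φ ((k : A) • x) = (k : ℝ) * φ x := by
    intro x
    rw [Int.cast_smul_eq_zsmul, map_zsmul, zsmul_eq_mul]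
  rw [h1, h2, map_sub, map_sub, hkφ, hkφ, hS _ hk g, hφ.1.2]
  ring
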